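/- Every linear classification problem (ℋ, μ) has a hard core: there exists 𝒞 ∈ 𝒮_𝒟(ℋ,μ) such that for every C ∈ 𝒮_𝒟(ℋ,μ), μ(C \ 𝒞) = 0. -/

import Mathlib

open MeasureTheory Filter
open scoped ENNReal NNReal

theorem hard_core_exists
    {X : Type*} [MeasurableSpace X]
    (μ : Measure (X × ℝ)) [IsProbabilityMeasure μ]
    (n : ℕ) (h : Fin n → X → ℝ)
    (hmeas : ∀ i, Measurable (h i)) (hbd : ∀ i x, |h i x| ≤ 1) :
    ∃ p : X × ℝ → ℝ,
      Integrable p μ ∧ (∀ z, 0 ≤ p z) ∧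
      (∀ lam : Fin n → ℝ,
        ∫ z, z.2 * (∑ j, lam j * h j z.1) * p z ∂μ = 0) ∧
      ∀ q : X × ℝ → ℝ,
        Integrable q μ → (∀ z, 0 ≤ q z) →
        (∀ lam : Fin n → ℝ,
          ∫ z, z.2 * (∑ j, lam j * h j z.1) * q z ∂μ = 0) →
        μ ({z | 0 < q z} \ {z | 0 < p z}) = 0 := by
  classical
  -- the family of admissible densities
  set P : ((X × ℝ) → ℝ) → Prop := fun q =>
    Integrable q μ ∧ (∀ z, 0 ≤ q z) ∧
      ∀ lam : Fin n → ℝ, ∫ z, z.2 * (∑ j, lam j * h j z.1) * q z ∂μ = 0 with hPdef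
  have hFm : ∀ lam : Fin n → ℝ,
      Measurable (fun z : X × ℝ => z.2 * ∑ j, lam j * h j z.1) := fun lam =>
    measurable_snd.mul
      (Finset.measurable_sum _ fun j _ => ((hmeas j).comp measurable_fst).const_mul (lam j))
  have hP0 : P (fun _ => 0) := by
    refine ⟨by simpa using (integrable_zero _ ℝ μ), fun z => le_refl 0, fun lam => by simp⟩
  set m : ℝ≥0∞ := ⨆ (q : (X × ℝ) → ℝ) (_ : P q), μ {z | 0 < q z} with hm
  have hmem_le : ∀ q, P q → μ {z | 0 < q z} ≤ m := by
    intro q hq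
    rw [hm]
    exact le_iSup₂ (f := fun (q : (X × ℝ) → ℝ) (_ : P q) => μ {z | 0 < q z}) q hq
  have hm_top : m ≠ ∞ := by
    refine ne_of_lt (lt_of_le_of_lt (iSup₂_le fun q _ => prob_le_one) ENNReal.one_lt_top)
  -- selection of an approximating sequence
  have hsel : ∀ k : ℕ, ∃ q, P q ∧ m ≤ μ {z | 0 < q z} + ((k : ℝ≥0∞) + 1)⁻¹ := by
    intro k
    rcases eq_or_ne m 0 with h0 | h0
    · exact ⟨fun _ => 0, hP0, by simp [h0]⟩
    · have hlt : m - ((k : ℝ≥0∞) + 1)⁻¹ < m :=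
        ENNReal.sub_lt_self hm_top h0 (by simp)
      rw [hm] at hlt
      obtain ⟨q, hq⟩ := lt_iSup_iff.mp hlt
      obtain ⟨hPq, hq'⟩ := lt_iSup_iff.mp hq
      exact ⟨q, hPq, tsub_le_iff_right.mp hq'.le⟩
  choose qs hqsP hqsm using hsel
  have hqsI : ∀ k, Integrable (qs k) μ := fun k => (hqsP k).1
  have hqs0 : ∀ k z, 0 ≤ qs k z := fun k => (hqsP k).2.1
  have hqsint : ∀ (k : ℕ) (lam : Fin n → ℝ), ∫ z, z.2 * (∑ j, lam j * h j z.1) * qs k z ∂μ = 0 :=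
    fun k => (hqsP k).2.2
  -- coefficients
  set c : ℕ → ℝ := fun k => ((2 : ℝ)⁻¹) ^ k * (1 + ∫ z, qs k z ∂μ)⁻¹ with hc
  have hInn : ∀ k, (0 : ℝ) < 1 + ∫ z, qs k z ∂μ := fun k => by
    have : (0:ℝ) ≤ ∫ z, qs k z ∂μ := integral_nonneg (fun z => hqs0 k z)
    linarith
  have hck : ∀ k, 0 < c k := fun k => by
    have := hInn k
    positivity
  have hckI : ∀ k, c k * ∫ z, qs k z ∂μ ≤ ((2 : ℝ)⁻¹) ^ k := by
    intro k
    rw [hc]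
    have h1 := hInn k
    have h2 : (1 + ∫ z, qs k z ∂μ)⁻¹ * ∫ z, qs k z ∂μ ≤ 1 := by
      rw [inv_mul_le_iff₀ h1]
      linarith
    calc ((2:ℝ)⁻¹) ^ k * (1 + ∫ z, qs k z ∂μ)⁻¹ * ∫ z, qs k z ∂μ
        = ((2:ℝ)⁻¹) ^ k * ((1 + ∫ z, qs k z ∂μ)⁻¹ * ∫ z, qs k z ∂μ) := by ring
      _ ≤ ((2:ℝ)⁻¹) ^ k * 1 := by
          exact mul_le_mul_of_nonneg_left h2 (by positivity)
      _ = ((2:ℝ)⁻¹) ^ k := mul_one _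
  -- the ENNReal-valued series
  set g : ℕ → (X × ℝ) → ℝ≥0∞ := fun k z => ENNReal.ofReal (c k * qs k z) with hg
  have hgm : ∀ k, AEMeasurable (g k) μ := fun k =>
    ENNReal.measurable_ofReal.comp_aemeasurable ((hqsI k).1.aemeasurable.const_mul _)
  set G : (X × ℝ) → ℝ≥0∞ := fun z => ∑' k, g k z with hG
  have hGm : AEMeasurable G μ := AEMeasurable.ennreal_tsum hgm
  have hlintg : ∀ k, ∫⁻ z, g k z ∂μ = ENNReal.ofReal (c k * ∫ z, qs k z ∂μ) := by
    intro k
    rw [hg]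
    rw [← ofReal_integral_eq_lintegral_ofReal ((hqsI k).const_mul _)
        (Filter.Eventually.of_forall fun z => mul_nonneg (hck k).le (hqs0 k z))]
    rw [integral_const_mul]
  have hGint : ∫⁻ z, G z ∂μ ≠ ∞ := by
    rw [hG]
    rw [lintegral_tsum hgm]
    have hbound : ∀ k, ∫⁻ z, g k z ∂μ ≤ ((2 : ℝ≥0∞)⁻¹) ^ k := by
      intro k
      rw [hlintg k]
      calc ENNReal.ofReal (c k * ∫ z, qs k z ∂μ)
          ≤ ENNReal.ofReal (((2:ℝ)⁻¹) ^ k) := ENNReal.ofReal_le_ofReal (hckI k)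
        _ = ((2 : ℝ≥0∞)⁻¹) ^ k := by
            rw [ENNReal.ofReal_pow (by norm_num), ENNReal.ofReal_inv_of_pos (by norm_num)]
            norm_num
    refine ne_of_lt (lt_of_le_of_lt (ENNReal.tsum_le_tsum hbound) ?_)
    rw [ENNReal.tsum_geometric]
    simp [ENNReal.sub_half]
  -- the candidate density
  set p : (X × ℝ) → ℝ := fun z => (G z).toReal with hp
  have hp0 : ∀ z, 0 ≤ p z := fun z => ENNReal.toReal_nonneg
  have hpI : Integrable p μ := integrable_toReal_of_lintegral_ne_top hGm hGint
  have haefin : ∀ᵐ z ∂μ, G z < ∞ := ae_lt_top' hGm hGint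
  -- pointwise facts on the a.e. set where G is finite
  have hpt : ∀ z, G z < ∞ →
      Summable (fun k => c k * qs k z) ∧ p z = ∑' k, c k * qs k z := by
    intro z hz
    have hsumm : Summable (fun k => (g k z).toReal) := ENNReal.summable_toReal hz.ne
    have heq : ∀ k, (g k z).toReal = c k * qs k z := fun k =>
      ENNReal.toReal_ofReal (mul_nonneg (hck k).le (hqs0 k z))
    constructor
    · exact hsumm.congr heq
    · rw [hp]
      have := ENNReal.tsum_toReal_eq (f := fun k => g k z) (fun k => ENNReal.ofReal_ne_top)
      rw [hG] at *
      simp only at this ⊢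
      rw [this]
      exact tsum_congr heq
  -- each term is at most p, a.e.
  have hle_ae : ∀ k, ∀ᵐ z ∂μ, c k * qs k z ≤ p z := by
    intro k
    filter_upwards [haefin] with z hz
    obtain ⟨hsumm, hpz⟩ := hpt z hz
    rw [hpz]
    exact Summable.le_tsum hsumm k (fun j _ => mul_nonneg (hck j).le (hqs0 j z))
  -- support inclusion a.e.
  have hsupp : ∀ k, μ {z | 0 < qs k z} ≤ μ {z | 0 < p z} := by
    intro k
    refine measure_mono_ae ?_
    filter_upwards [hle_ae k] with z hz hzq
    have : (0:ℝ) < qs k z := hzq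
    have h1 : 0 < c k * qs k z := mul_pos (hck k) this
    exact lt_of_lt_of_le h1 hz
  -- m ≤ μ {0 < p}
  have hmA : m ≤ μ {z | 0 < p z} := by
    refine ENNReal.le_of_forall_pos_le_add fun ε hε hfin => ?_
    obtain ⟨k, hk⟩ := ENNReal.exists_inv_nat_lt (a := (ε : ℝ≥0∞)) (by simpa using hε.ne')
    calc m ≤ μ {z | 0 < qs k z} + ((k : ℝ≥0∞) + 1)⁻¹ := hqsm k
      _ ≤ μ {z | 0 < p z} + (ε : ℝ≥0∞) := by
          refine add_le_add (hsupp k) ?_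
          refine le_trans ?_ hk.le
          exact ENNReal.inv_le_inv.mpr (by simp)
  -- P holds for p
  have hPp : P p := by
    refine ⟨hpI, hp0, fun lam => ?_⟩
    set F : (X × ℝ) → ℝ := fun z => z.2 * ∑ j, lam j * h j z.1 with hF
    show ∫ z, F z * p z ∂μ = 0
    by_cases hi : Integrable (fun z => F z * p z) μ
    · -- each term F * (c k * qs k) is integrable and has integral 0
      have hterm_int : ∀ k, Integrable (fun z => F z * (c k * qs k z)) μ := by
        intro k
        refine Integrable.mono' hi.norm
          ((hFm lam).aestronglyMeasurable.mul ((hqsI k).1.const_mul _)) ?_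
        filter_upwards [hle_ae k] with z hz
        calc ‖F z * (c k * qs k z)‖ = ‖F z‖ * (c k * qs k z) := by
              rw [norm_mul (F z), Real.norm_of_nonneg (mul_nonneg (hck k).le (hqs0 k z))]
          _ ≤ ‖F z‖ * p z := mul_le_mul_of_nonneg_left hz (norm_nonneg _)
          _ = ‖F z * p z‖ := by
              rw [norm_mul (F z), Real.norm_of_nonneg (hp0 z)]
      have hterm_zero : ∀ k, ∫ z, F z * (c k * qs k z) ∂μ = 0 := by
        intro k
        have : (fun z => F z * (c k * qs k z)) = fun z => c k * (F z * qs k z) := by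
          funext z; ring
        rw [this, integral_const_mul, hqsint k lam, mul_zero]
      -- dominated convergence with partial sums
      have hdct := tendsto_integral_of_dominated_convergence
        (F := fun K z => ∑ k ∈ Finset.range K, F z * (c k * qs k z))
        (f := fun z => F z * p z)
        (bound := fun z => ‖F z * p z‖)
        (fun K => Finset.aestronglyMeasurable_fun_sum _ fun k _ => (hterm_int k).1)
        hi.norm
        (by
          intro K
          have hleK : ∀ᵐ z ∂μ, ∀ k, c k * qs k z ≤ p z := ae_all_iff.mpr hle_ae
          filter_upwards [haefin] with z hz
          obtain ⟨hsumm, hpz⟩ := hpt z hz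
          have hsum_le : ∑ k ∈ Finset.range K, c k * qs k z ≤ p z := by
            rw [hpz]
            exact Summable.sum_le_tsum _ (fun j _ => mul_nonneg (hck j).le (hqs0 j z)) hsumm
          have hsum_nn : 0 ≤ ∑ k ∈ Finset.range K, c k * qs k z :=
            Finset.sum_nonneg fun j _ => mul_nonneg (hck j).le (hqs0 j z)
          calc ‖∑ k ∈ Finset.range K, F z * (c k * qs k z)‖
              = ‖F z * ∑ k ∈ Finset.range K, c k * qs k z‖ := by
                rw [← Finset.mul_sum]
            _ = ‖F z‖ * ‖∑ k ∈ Finset.range K, c k * qs k z‖ := norm_mul _ _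
            _ ≤ ‖F z‖ * p z := by
                rw [Real.norm_of_nonneg hsum_nn]
                exact mul_le_mul_of_nonneg_left hsum_le (norm_nonneg _)
            _ = ‖F z * p z‖ := by
                rw [norm_mul (F z), Real.norm_of_nonneg (hp0 z)])
        (by
          filter_upwards [haefin] with z hz
          obtain ⟨hsumm, hpz⟩ := hpt z hz
          have h1 : Tendsto (fun K => ∑ k ∈ Finset.range K, c k * qs k z)
              atTop (nhds (p z)) := by
            rw [hpz]
            exact hsumm.hasSum.tendsto_sum_nat
          have h2 := h1.const_mul (F z)
          refine h2.congr fun K => ?_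
          rw [Finset.mul_sum])
      have hzero : ∀ K, ∫ z, ∑ k ∈ Finset.range K, F z * (c k * qs k z) ∂μ = 0 := by
        intro K
        rw [integral_finset_sum _ fun k _ => hterm_int k]
        exact Finset.sum_eq_zero fun k _ => hterm_zero k
      have : Tendsto (fun K : ℕ => (0 : ℝ)) atTop (nhds (∫ z, F z * p z ∂μ)) := by
        refine hdct.congr fun K => hzero K
      exact tendsto_nhds_unique this tendsto_const_nhds
    · exact integral_undef hi
  refine ⟨p, hpI, hp0, hPp.2.2, ?_⟩
  -- maximality
  intro q hqI hq0 hqint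
  have hPq : P q := ⟨hqI, hq0, hqint⟩
  -- the sum p + q is admissible
  have hPr : P (fun z => p z + q z) := by
    refine ⟨hpI.add hqI, fun z => add_nonneg (hp0 z) (hq0 z), fun lam => ?_⟩
    set F : (X × ℝ) → ℝ := fun z => z.2 * ∑ j, lam j * h j z.1 with hF
    show ∫ z, F z * (p z + q z) ∂μ = 0
    by_cases hi : Integrable (fun z => F z * (p z + q z)) μ
    · have hip : Integrable (fun z => F z * p z) μ := by
        refine Integrable.mono' hi.norm ((hFm lam).aestronglyMeasurable.mul hpI.1)
          (Filter.Eventually.of_forall fun z => ?_)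
        calc ‖F z * p z‖ = ‖F z‖ * p z := by
              rw [norm_mul (F z), Real.norm_of_nonneg (hp0 z)]
          _ ≤ ‖F z‖ * (p z + q z) :=
              mul_le_mul_of_nonneg_left (le_add_of_nonneg_right (hq0 z)) (norm_nonneg _)
          _ = ‖F z * (p z + q z)‖ := by
              rw [norm_mul (F z), Real.norm_of_nonneg (add_nonneg (hp0 z) (hq0 z))]
      have hiq : Integrable (fun z => F z * q z) μ := by
        refine Integrable.mono' hi.norm ((hFm lam).aestronglyMeasurable.mul hqI.1)
          (Filter.Eventually.of_forall fun z => ?_)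
        calc ‖F z * q z‖ = ‖F z‖ * q z := by
              rw [norm_mul (F z), Real.norm_of_nonneg (hq0 z)]
          _ ≤ ‖F z‖ * (p z + q z) :=
              mul_le_mul_of_nonneg_left (le_add_of_nonneg_left (hp0 z)) (norm_nonneg _)
          _ = ‖F z * (p z + q z)‖ := by
              rw [norm_mul (F z), Real.norm_of_nonneg (add_nonneg (hp0 z) (hq0 z))]
      have : ∫ z, F z * (p z + q z) ∂μ = (∫ z, F z * p z ∂μ) + ∫ z, F z * q z ∂μ := by
        rw [← integral_add hip hiq]
        congr 1
        funext z
        ring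
      rw [this, hPp.2.2 lam, hqint lam, add_zero]
    · exact integral_undef hi
  -- measurable representatives
  set p' : (X × ℝ) → ℝ := hpI.1.mk p with hp'
  have hp'm : StronglyMeasurable p' := hpI.1.stronglyMeasurable_mk
  have hp'eq : p =ᵐ[μ] p' := hpI.1.ae_eq_mk
  set q' : (X × ℝ) → ℝ := hqI.1.mk q with hq'
  have hq'm : StronglyMeasurable q' := hqI.1.stronglyMeasurable_mk
  have hq'eq : q =ᵐ[μ] q' := hqI.1.ae_eq_mk
  have hAeq : {z | 0 < p z} =ᵐ[μ] {z | 0 < p' z} := by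
    filter_upwards [hp'eq] with z hz
    show (0 < p z) = (0 < p' z)
    rw [hz]
  have hBeq : {z | 0 < q z} =ᵐ[μ] {z | 0 < q' z} := by
    filter_upwards [hq'eq] with z hz
    show (0 < q z) = (0 < q' z)
    rw [hz]
  have hA'meas : MeasurableSet {z | 0 < p' z} :=
    measurableSet_lt measurable_const hp'm.measurable
  have hB'meas : MeasurableSet {z | 0 < q' z} :=
    measurableSet_lt measurable_const hq'm.measurable
  have hdiff : μ ({z | 0 < q z} \ {z | 0 < p z})
      = μ ({z | 0 < q' z} \ {z | 0 < p' z}) := by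
    refine measure_congr ?_
    filter_upwards [hp'eq, hq'eq] with z h1 h2
    show (z ∈ {z | 0 < q z} \ {z | 0 < p z}) = (z ∈ {z | 0 < q' z} \ {z | 0 < p' z})
    simp only [Set.mem_diff, Set.mem_setOf_eq, h1, h2]
  rw [hdiff]
  -- union of supports
  have hUeq : ({z | 0 < p' z} ∪ {z | 0 < q' z} : Set (X × ℝ)) =ᵐ[μ]
      ({z | 0 < p z + q z} : Set (X × ℝ)) := by
    filter_upwards [hp'eq, hq'eq] with z h1 h2
    have hiff : (0 < p' z ∨ 0 < q' z) ↔ 0 < p z + q z := by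
      rw [← h1, ← h2]
      constructor
      · rintro (hz | hz)
        · linarith [hq0 z]
        · linarith [hp0 z]
      · intro hz
        by_contra hcon
        push_neg at hcon
        linarith [hcon.1, hcon.2]
    simp only [Set.mem_union, Set.mem_setOf_eq, eq_iff_iff]
    exact hiff
  have hUle : μ ({z | 0 < p' z} ∪ {z | 0 < q' z}) ≤ m := by
    rw [measure_congr hUeq]
    exact hmem_le _ hPr
  have hAge : m ≤ μ {z | 0 < p' z} := by
    rw [← measure_congr hAeq]
    exact hmA
  have hsplit : μ {z | 0 < p' z} + μ ({z | 0 < q' z} \ {z | 0 < p' z})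
      = μ ({z | 0 < p' z} ∪ {z | 0 < q' z}) := by
    rw [← measure_union disjoint_sdiff_self_right (hB'meas.diff hA'meas)]
    rw [Set.union_diff_self]
  have hfinal : μ {z | 0 < p' z} + μ ({z | 0 < q' z} \ {z | 0 < p' z})
      ≤ μ {z | 0 < p' z} + 0 := by
    rw [add_zero, hsplit]
    exact le_trans hUle hAge
  have := ENNReal.le_of_add_le_add_left (measure_ne_top μ _) hfinal
  exact le_antisymm this zero_le
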